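/- Let H be an n×n heptadiagonal matrix (n > 4) with g_i ≠ 0 for 1 ≤ i ≤ n-3, and let A, B, C be the three solutions of the seven-term recurrence with initial triples (0,0,1), (0,1,0), (1,0,0). Then H is invertible if and only if X_{n+1} ≠ 0, where X_{n+1} = det [[A_{n+1}, A_{n+2}, A_{n+3}], [B_{n+1}, B_{n+2}, B_{n+3}], [C_{n+1}, C_{n+2}, C_{n+3}]]. -/

import Mathlib

open Matrix

/-- The `n × n` heptadiagonal matrix of (1.1), with 1-indexed diagonal sequences
`a, b, c, d, e, f, g : ℤ → ℝ` (entry `H i j` with `i, j : Fin n` corresponds to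
row `i+1`, column `j+1` in the paper's indexing). -/
def heptaMatrix (n : ℕ) (a b c d e f g : ℤ → ℝ) : Matrix (Fin n) (Fin n) ℝ :=
  fun i j =>
    if ((j : ℤ) + 1) = ((i : ℤ) + 1) - 3 then a ((i : ℤ) + 1)
    else if ((j : ℤ) + 1) = ((i : ℤ) + 1) - 2 then b ((i : ℤ) + 1)
    else if ((j : ℤ) + 1) = ((i : ℤ) + 1) - 1 then c ((i : ℤ) + 1)
    else if ((j : ℤ) + 1) = ((i : ℤ) + 1) then d ((i : ℤ) + 1)
    else if ((j : ℤ) + 1) = ((i : ℤ) + 1) + 1 then e ((i : ℤ) + 1)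
    else if ((j : ℤ) + 1) = ((i : ℤ) + 1) + 2 then f ((i : ℤ) + 1)
    else if ((j : ℤ) + 1) = ((i : ℤ) + 1) + 3 then g ((i : ℤ) + 1)
    else 0

/-- `W : ℤ → ℝ` satisfies the seven-term recurrence
`aᵢ W_{i-3} + bᵢ W_{i-2} + cᵢ W_{i-1} + dᵢ Wᵢ + eᵢ W_{i+1} + fᵢ W_{i+2} + gᵢ W_{i+3} = 0`
for `1 ≤ i ≤ n`, with out-of-range terms (index `≤ 0`) treated as zero. -/
def SevenTermRec (n : ℕ) (a b c d e f g : ℤ → ℝ) (W : ℤ → ℝ) : Prop :=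
  (∀ j : ℤ, j ≤ 0 → W j = 0) ∧
  (∀ i : ℤ, 1 ≤ i → i ≤ (n : ℤ) →
    a i * W (i - 3) + b i * W (i - 2) + c i * W (i - 1) + d i * W i +
      e i * W (i + 1) + f i * W (i + 2) + g i * W (i + 3) = 0)

/-- The `k`-th standard basis vector of `ℝⁿ` (1-indexed `k`). -/
def stdBasis (n : ℕ) (k : ℤ) : Fin n → ℝ := fun i => if ((i : ℤ) + 1) = k then 1 else 0

/-- The 3×3 determinant with rows formed from `A`, `B`, `C` at indices `p`, `q`, `r`. -/
def det3 (A B C : ℤ → ℝ) (p q r : ℤ) : ℝ :=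
  Matrix.det !![A p, A q, A r; B p, B q, B r; C p, C q, C r]

/-- The `k`-th column (1-indexed, `1 ≤ k ≤ n`) of a matrix, as a vector; `0` out of range. -/
def matCol (n : ℕ) (M : Matrix (Fin n) (Fin n) ℝ) (k : ℤ) : Fin n → ℝ :=
  fun i => if hk : 1 ≤ k ∧ k ≤ (n : ℤ) then M i ⟨(k - 1).toNat, by omega⟩ else 0

namespace Stmt10Aux

open Matrix

/-- extension of a vector by zero, 1-indexed -/
noncomputable def extv (n : ℕ) (x : Fin n → ℝ) (k : ℤ) : ℝ :=
  if hk : 1 ≤ k ∧ k ≤ (n : ℤ) then x ⟨(k - 1).toNat, by omega⟩ else 0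

lemma sum_ind {n : ℕ} (t : ℤ) (v : ℝ) (x : Fin n → ℝ) :
    (∑ j : Fin n, (if ((j : ℤ) + 1) = t then v else 0) * x j) = v * extv n x t := by
  unfold extv
  split_ifs with h
  · rw [Finset.sum_eq_single (⟨(t - 1).toNat, by omega⟩ : Fin n)]
    · rw [if_pos (by simp; omega)]
    · intro j _ hj
      rw [if_neg, zero_mul]
      intro hc
      apply hj
      apply Fin.ext
      show (j : ℕ) = (t - 1).toNat
      omega
    · intro hmem; exact absurd (Finset.mem_univ _) hmem
  · rw [mul_zero]
    apply Finset.sum_eq_zero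
    intro j _
    have := j.isLt
    rw [if_neg (by omega), zero_mul]

set_option maxHeartbeats 1000000 in
lemma hepta_mulVec {n : ℕ} (a b c d e f g : ℤ → ℝ) (x : Fin n → ℝ) (i : Fin n) :
    (heptaMatrix n a b c d e f g).mulVec x i =
      a ((i:ℤ)+1) * extv n x ((i:ℤ)+1-3) + b ((i:ℤ)+1) * extv n x ((i:ℤ)+1-2) +
      c ((i:ℤ)+1) * extv n x ((i:ℤ)+1-1) + d ((i:ℤ)+1) * extv n x ((i:ℤ)+1) +
      e ((i:ℤ)+1) * extv n x ((i:ℤ)+1+1) + f ((i:ℤ)+1) * extv n x ((i:ℤ)+1+2) +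
      g ((i:ℤ)+1) * extv n x ((i:ℤ)+1+3) := by
  have hsplit : ∀ j : Fin n, heptaMatrix n a b c d e f g i j * x j =
      (if ((j:ℤ)+1) = ((i:ℤ)+1)-3 then a ((i:ℤ)+1) else 0) * x j +
      (if ((j:ℤ)+1) = ((i:ℤ)+1)-2 then b ((i:ℤ)+1) else 0) * x j +
      (if ((j:ℤ)+1) = ((i:ℤ)+1)-1 then c ((i:ℤ)+1) else 0) * x j +
      (if ((j:ℤ)+1) = ((i:ℤ)+1) then d ((i:ℤ)+1) else 0) * x j +
      (if ((j:ℤ)+1) = ((i:ℤ)+1)+1 then e ((i:ℤ)+1) else 0) * x j +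
      (if ((j:ℤ)+1) = ((i:ℤ)+1)+2 then f ((i:ℤ)+1) else 0) * x j +
      (if ((j:ℤ)+1) = ((i:ℤ)+1)+3 then g ((i:ℤ)+1) else 0) * x j := by
    intro j
    unfold heptaMatrix
    split_ifs <;> first | ring1 | (exfalso; omega)
  simp only [Matrix.mulVec, dotProduct]
  rw [Finset.sum_congr rfl fun j _ => hsplit j]
  simp only [Finset.sum_add_distrib, sum_ind]

lemma comboRec {n : ℕ} {a b c d e f g A B C : ℤ → ℝ}
    (hA : SevenTermRec n a b c d e f g A) (hB : SevenTermRec n a b c d e f g B)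
    (hC : SevenTermRec n a b c d e f g C) (p q r : ℝ) :
    SevenTermRec n a b c d e f g (fun t => p * A t + q * B t + r * C t) := by
  constructor
  · intro j hj
    simp [hA.1 j hj, hB.1 j hj, hC.1 j hj]
  · intro i h1 h2
    have := hA.2 i h1 h2
    have := hB.2 i h1 h2
    have := hC.2 i h1 h2
    simp only []
    linear_combination p * hA.2 i h1 h2 + q * hB.2 i h1 h2 + r * hC.2 i h1 h2

lemma key {n : ℕ} (hn : 4 < n) (a b c d e f g W : ℤ → ℝ)
    (hg1 : g ((n : ℤ) - 2) = 1) (hg2 : g ((n : ℤ) - 1) = 1) (hg3 : g (n : ℤ) = 1)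
    (hf1 : f ((n : ℤ) - 1) = 0) (hf2 : f (n : ℤ) = 0) (he1 : e (n : ℤ) = 0)
    (hW : SevenTermRec n a b c d e f g W) :
    (heptaMatrix n a b c d e f g).mulVec (fun i => W ((i:ℤ)+1)) =
      fun i : Fin n => -(W ((n:ℤ)+1) * (if ((i:ℤ)+1) = (n:ℤ)-2 then 1 else 0)
        + W ((n:ℤ)+2) * (if ((i:ℤ)+1) = (n:ℤ)-1 then 1 else 0)
        + W ((n:ℤ)+3) * (if ((i:ℤ)+1) = (n:ℤ) then 1 else 0)) := by
  funext i
  rw [hepta_mulVec]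
  have hlt := i.isLt
  have hext : ∀ t : ℤ, t ≤ (n:ℤ) → extv n (fun i : Fin n => W ((i:ℤ)+1)) t = W t := by
    intro t ht
    unfold extv
    split_ifs with h
    · show W ((((t-1).toNat : ℕ) : ℤ) + 1) = W t
      congr 1
      omega
    · exact (hW.1 t (by omega)).symm
  have hext0 : ∀ t : ℤ, (n:ℤ) < t → extv n (fun i : Fin n => W ((i:ℤ)+1)) t = 0 := by
    intro t ht
    unfold extv
    rw [dif_neg (by omega)]
  have hrec := hW.2 ((i:ℤ)+1) (by omega) (by omega)
  by_cases h1 : ((i:ℤ)+1) = (n:ℤ)-2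
  · rw [hext _ (by omega), hext _ (by omega), hext _ (by omega), hext _ (by omega),
      hext _ (by omega), hext _ (by omega), hext0 _ (by omega)]
    rw [if_pos h1, if_neg (by omega), if_neg (by omega)]
    rw [h1] at hrec ⊢
    rw [hg1] at hrec ⊢
    have h2 : (n:ℤ) - 2 + 3 = (n:ℤ) + 1 := by ring
    rw [h2] at hrec
    linear_combination hrec
  · by_cases h2 : ((i:ℤ)+1) = (n:ℤ)-1
    · rw [hext _ (by omega), hext _ (by omega), hext _ (by omega), hext _ (by omega),
        hext _ (by omega), hext0 _ (by omega), hext0 _ (by omega)]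
      rw [if_neg (by omega), if_pos h2, if_neg (by omega)]
      rw [h2] at hrec ⊢
      rw [hg2, hf1] at hrec ⊢
      have h3 : (n:ℤ) - 1 + 3 = (n:ℤ) + 2 := by ring
      have h4 : (n:ℤ) - 1 + 2 = (n:ℤ) + 1 := by ring
      rw [h3, h4] at hrec
      linear_combination hrec
    · by_cases h3 : ((i:ℤ)+1) = (n:ℤ)
      · rw [hext _ (by omega), hext _ (by omega), hext _ (by omega), hext _ (by omega),
          hext0 _ (by omega), hext0 _ (by omega), hext0 _ (by omega)]
        rw [if_neg (by omega), if_neg (by omega), if_pos h3]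
        rw [h3] at hrec ⊢
        rw [hg3, hf2, he1] at hrec ⊢
        linear_combination hrec
      · rw [hext _ (by omega), hext _ (by omega), hext _ (by omega), hext _ (by omega),
          hext _ (by omega), hext _ (by omega), hext _ (by omega)]
        rw [if_neg (by omega), if_neg (by omega), if_neg (by omega)]
        linear_combination hrec

lemma stdB_of_eq {n : ℕ} {s : ℤ} {i : Fin n} (h : (i:ℤ)+1 = s) : _root_.stdBasis n s i = 1 := by
  simp [_root_.stdBasis, h]

lemma stdB_of_ne {n : ℕ} {s : ℤ} {i : Fin n} (h : ¬ ((i:ℤ)+1 = s)) : _root_.stdBasis n s i = 0 := by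
  simp [_root_.stdBasis, h]

set_option maxHeartbeats 1000000 in
lemma col_eq {n : ℕ} (a b c d e f g : ℤ → ℝ) (t : ℤ) (j : Fin n) (hj : (j : ℤ) = t + 2)
    (i : Fin n) :
    heptaMatrix n a b c d e f g i j =
      g t * _root_.stdBasis n t i + f (t+1) * _root_.stdBasis n (t+1) i + e (t+2) * _root_.stdBasis n (t+2) i +
      d (t+3) * _root_.stdBasis n (t+3) i + c (t+4) * _root_.stdBasis n (t+4) i + b (t+5) * _root_.stdBasis n (t+5) i +
      a (t+6) * _root_.stdBasis n (t+6) i := by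
  by_cases h0 : (i:ℤ)+1 = t
  · rw [stdB_of_eq h0, stdB_of_ne (s := t+1) (by omega), stdB_of_ne (s := t+2) (by omega),
      stdB_of_ne (s := t+3) (by omega), stdB_of_ne (s := t+4) (by omega),
      stdB_of_ne (s := t+5) (by omega), stdB_of_ne (s := t+6) (by omega)]
    unfold heptaMatrix
    simp only [h0]
    split_ifs <;> first | ring1 | (exfalso; omega)
  by_cases h1 : (i:ℤ)+1 = t+1
  · rw [stdB_of_ne (s := t) (by omega), stdB_of_eq h1, stdB_of_ne (s := t+2) (by omega),
      stdB_of_ne (s := t+3) (by omega), stdB_of_ne (s := t+4) (by omega),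
      stdB_of_ne (s := t+5) (by omega), stdB_of_ne (s := t+6) (by omega)]
    unfold heptaMatrix
    simp only [h1]
    split_ifs <;> first | ring1 | (exfalso; omega)
  by_cases h2 : (i:ℤ)+1 = t+2
  · rw [stdB_of_ne (s := t) (by omega), stdB_of_ne (s := t+1) (by omega), stdB_of_eq h2,
      stdB_of_ne (s := t+3) (by omega), stdB_of_ne (s := t+4) (by omega),
      stdB_of_ne (s := t+5) (by omega), stdB_of_ne (s := t+6) (by omega)]
    unfold heptaMatrix
    simp only [h2]
    split_ifs <;> first | ring1 | (exfalso; omega)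
  by_cases h3 : (i:ℤ)+1 = t+3
  · rw [stdB_of_ne (s := t) (by omega), stdB_of_ne (s := t+1) (by omega),
      stdB_of_ne (s := t+2) (by omega), stdB_of_eq h3, stdB_of_ne (s := t+4) (by omega),
      stdB_of_ne (s := t+5) (by omega), stdB_of_ne (s := t+6) (by omega)]
    unfold heptaMatrix
    simp only [h3]
    split_ifs <;> first | ring1 | (exfalso; omega)
  by_cases h4 : (i:ℤ)+1 = t+4
  · rw [stdB_of_ne (s := t) (by omega), stdB_of_ne (s := t+1) (by omega),
      stdB_of_ne (s := t+2) (by omega), stdB_of_ne (s := t+3) (by omega), stdB_of_eq h4,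
      stdB_of_ne (s := t+5) (by omega), stdB_of_ne (s := t+6) (by omega)]
    unfold heptaMatrix
    simp only [h4]
    split_ifs <;> first | ring1 | (exfalso; omega)
  by_cases h5 : (i:ℤ)+1 = t+5
  · rw [stdB_of_ne (s := t) (by omega), stdB_of_ne (s := t+1) (by omega),
      stdB_of_ne (s := t+2) (by omega), stdB_of_ne (s := t+3) (by omega),
      stdB_of_ne (s := t+4) (by omega), stdB_of_eq h5, stdB_of_ne (s := t+6) (by omega)]
    unfold heptaMatrix
    simp only [h5]
    split_ifs <;> first | ring1 | (exfalso; omega)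
  by_cases h6 : (i:ℤ)+1 = t+6
  · rw [stdB_of_ne (s := t) (by omega), stdB_of_ne (s := t+1) (by omega),
      stdB_of_ne (s := t+2) (by omega), stdB_of_ne (s := t+3) (by omega),
      stdB_of_ne (s := t+4) (by omega), stdB_of_ne (s := t+5) (by omega), stdB_of_eq h6]
    unfold heptaMatrix
    simp only [h6]
    split_ifs <;> first | ring1 | (exfalso; omega)
  · rw [stdB_of_ne (s := t) (by omega), stdB_of_ne (s := t+1) (by omega),
      stdB_of_ne (s := t+2) (by omega), stdB_of_ne (s := t+3) (by omega),
      stdB_of_ne (s := t+4) (by omega), stdB_of_ne (s := t+5) (by omega),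
      stdB_of_ne (s := t+6) (by omega)]
    unfold heptaMatrix
    split_ifs <;> first | ring1 | (exfalso; omega)

lemma stdBasis_zero {n : ℕ} {s : ℤ} (hs : (n:ℤ) < s) : _root_.stdBasis n s = 0 := by
  funext i
  have := i.isLt
  simp only [_root_.stdBasis, Pi.zero_apply]
  rw [if_neg (by omega)]

end Stmt10Aux

open Stmt10Aux in
set_option maxHeartbeats 1000000 in
theorem stmt_10 (n : ℕ) (hn : 4 < n) (a b c d e f g A B C : ℤ → ℝ)
    (hg : ∀ i : ℤ, 1 ≤ i → i ≤ (n : ℤ) - 3 → g i ≠ 0)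
    (hg1 : g ((n : ℤ) - 2) = 1) (hg2 : g ((n : ℤ) - 1) = 1) (hg3 : g (n : ℤ) = 1)
    (hf1 : f ((n : ℤ) - 1) = 0) (hf2 : f (n : ℤ) = 0) (he1 : e (n : ℤ) = 0)
    (hA : SevenTermRec n a b c d e f g A) (hA1 : A 1 = 0) (hA2 : A 2 = 0) (hA3 : A 3 = 1)
    (hB : SevenTermRec n a b c d e f g B) (hB1 : B 1 = 0) (hB2 : B 2 = 1) (hB3 : B 3 = 0)
    (hC : SevenTermRec n a b c d e f g C) (hC1 : C 1 = 1) (hC2 : C 2 = 0) (hC3 : C 3 = 0) :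
    IsUnit (heptaMatrix n a b c d e f g).det ↔
      det3 A B C ((n : ℤ) + 1) ((n : ℤ) + 2) ((n : ℤ) + 3) ≠ 0 := by
  classical
  have hdetN : (!![A ((n:ℤ)+1), B ((n:ℤ)+1), C ((n:ℤ)+1);
      A ((n:ℤ)+2), B ((n:ℤ)+2), C ((n:ℤ)+2);
      A ((n:ℤ)+3), B ((n:ℤ)+3), C ((n:ℤ)+3)] : Matrix (Fin 3) (Fin 3) ℝ).det
      = det3 A B C ((n:ℤ)+1) ((n:ℤ)+2) ((n:ℤ)+3) := by
    simp [det3, Matrix.det_fin_three]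
    ring
  rw [isUnit_iff_ne_zero]
  constructor
  · -- det H ≠ 0 → det3 ≠ 0
    intro hH hd3
    apply hH
    rw [← hdetN] at hd3
    obtain ⟨v, hv0, hvz⟩ := Matrix.exists_mulVec_eq_zero_iff.mpr hd3
    have h1 := congrFun hvz 0
    have h2 := congrFun hvz 1
    have h3 := congrFun hvz 2
    simp [Matrix.mulVec, dotProduct, Fin.sum_univ_three] at h1 h2 h3
    have hx : (heptaMatrix n a b c d e f g).mulVec
        (fun i : Fin n => (fun t => v 0 * A t + v 1 * B t + v 2 * C t) ((i:ℤ)+1)) = 0 := by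
      rw [key hn a b c d e f g _ hg1 hg2 hg3 hf1 hf2 he1 (comboRec hA hB hC (v 0) (v 1) (v 2))]
      funext i
      simp only [Pi.zero_apply]
      linear_combination (-(if ((i:ℤ)+1) = (n:ℤ)-2 then (1:ℝ) else 0)) * h1
        + (-(if ((i:ℤ)+1) = (n:ℤ)-1 then (1:ℝ) else 0)) * h2
        + (-(if ((i:ℤ)+1) = (n:ℤ) then (1:ℝ) else 0)) * h3
    have hxne : (fun i : Fin n => (fun t => v 0 * A t + v 1 * B t + v 2 * C t) ((i:ℤ)+1)) ≠ 0 := by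
      have hvk : v 0 ≠ 0 ∨ v 1 ≠ 0 ∨ v 2 ≠ 0 := by
        by_contra hcon
        push_neg at hcon
        apply hv0
        funext k
        fin_cases k <;> simp [hcon.1, hcon.2.1, hcon.2.2]
      intro h0
      rcases hvk with hv | hv | hv
      · have := congrFun h0 ⟨2, by omega⟩
        simp only [Pi.zero_apply] at this
        apply hv
        calc v 0 = v 0 * A 3 + v 1 * B 3 + v 2 * C 3 := by rw [hA3, hB3, hC3]; ring
        _ = 0 := by
            rw [← this]
            norm_num
      · have := congrFun h0 ⟨1, by omega⟩
        simp only [Pi.zero_apply] at this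
        apply hv
        calc v 1 = v 0 * A 2 + v 1 * B 2 + v 2 * C 2 := by rw [hA2, hB2, hC2]; ring
        _ = 0 := by
            rw [← this]
            norm_num
      · have := congrFun h0 ⟨0, by omega⟩
        simp only [Pi.zero_apply] at this
        apply hv
        calc v 2 = v 0 * A 1 + v 1 * B 1 + v 2 * C 1 := by rw [hA1, hB1, hC1]; ring
        _ = 0 := by
            rw [← this]
            norm_num
    exact Matrix.exists_mulVec_eq_zero_iff.mp ⟨_, hxne, hx⟩
  · -- det3 ≠ 0 → det H ≠ 0
    intro hd3
    rw [← hdetN] at hd3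
    have hNsurj : Function.Surjective
        (!![A ((n:ℤ)+1), B ((n:ℤ)+1), C ((n:ℤ)+1);
            A ((n:ℤ)+2), B ((n:ℤ)+2), C ((n:ℤ)+2);
            A ((n:ℤ)+3), B ((n:ℤ)+3), C ((n:ℤ)+3)] : Matrix (Fin 3) (Fin 3) ℝ).mulVec :=
      Matrix.mulVec_surjective_iff_isUnit.mpr
        ((Matrix.isUnit_iff_isUnit_det _).mpr (isUnit_iff_ne_zero.mpr hd3))
    set R := LinearMap.range (Matrix.mulVecLin (heptaMatrix n a b c d e f g)) with hR
    have hbase : ∀ c1 c2 c3 : ℝ,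
        (fun i : Fin n => c1 * (if ((i:ℤ)+1) = (n:ℤ)-2 then (1:ℝ) else 0)
          + c2 * (if ((i:ℤ)+1) = (n:ℤ)-1 then (1:ℝ) else 0)
          + c3 * (if ((i:ℤ)+1) = (n:ℤ) then (1:ℝ) else 0)) ∈ R := by
      intro c1 c2 c3
      obtain ⟨v, hv⟩ := hNsurj ![-c1, -c2, -c3]
      have h1 := congrFun hv 0
      have h2 := congrFun hv 1
      have h3 := congrFun hv 2
      simp [Matrix.mulVec, dotProduct, Fin.sum_univ_three] at h1 h2 h3
      refine ⟨(fun i : Fin n => (fun t => v 0 * A t + v 1 * B t + v 2 * C t) ((i:ℤ)+1)), ?_⟩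
      rw [Matrix.mulVecLin_apply,
        key hn a b c d e f g _ hg1 hg2 hg3 hf1 hf2 he1 (comboRec hA hB hC (v 0) (v 1) (v 2))]
      funext i
      beta_reduce
      linear_combination (-(if ((i:ℤ)+1) = (n:ℤ)-2 then (1:ℝ) else 0)) * h1
        + (-(if ((i:ℤ)+1) = (n:ℤ)-1 then (1:ℝ) else 0)) * h2
        + (-(if ((i:ℤ)+1) = (n:ℤ) then (1:ℝ) else 0)) * h3
    have hkey3 : ∀ t : ℤ, (n:ℤ) - 3 < t → t ≤ (n:ℤ) → _root_.stdBasis n t ∈ R := by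
      intro t ht1 ht2
      have hcase : t = (n:ℤ)-2 ∨ t = (n:ℤ)-1 ∨ t = (n:ℤ) := by omega
      rcases hcase with h | h | h
      · have he : _root_.stdBasis n t = (fun i : Fin n =>
            (1:ℝ) * (if ((i:ℤ)+1) = (n:ℤ)-2 then (1:ℝ) else 0)
            + 0 * (if ((i:ℤ)+1) = (n:ℤ)-1 then (1:ℝ) else 0)
            + 0 * (if ((i:ℤ)+1) = (n:ℤ) then (1:ℝ) else 0)) := by
          funext i
          simp [_root_.stdBasis, h]
        rw [he]; exact hbase 1 0 0
      · have he : _root_.stdBasis n t = (fun i : Fin n =>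
            (0:ℝ) * (if ((i:ℤ)+1) = (n:ℤ)-2 then (1:ℝ) else 0)
            + 1 * (if ((i:ℤ)+1) = (n:ℤ)-1 then (1:ℝ) else 0)
            + 0 * (if ((i:ℤ)+1) = (n:ℤ) then (1:ℝ) else 0)) := by
          funext i
          simp [_root_.stdBasis, h]
        rw [he]; exact hbase 0 1 0
      · have he : _root_.stdBasis n t = (fun i : Fin n =>
            (0:ℝ) * (if ((i:ℤ)+1) = (n:ℤ)-2 then (1:ℝ) else 0)
            + 0 * (if ((i:ℤ)+1) = (n:ℤ)-1 then (1:ℝ) else 0)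
            + 1 * (if ((i:ℤ)+1) = (n:ℤ) then (1:ℝ) else 0)) := by
          funext i
          simp [_root_.stdBasis, h]
        rw [he]; exact hbase 0 0 1
    have hmain : ∀ k : ℕ, ∀ t : ℤ, 1 ≤ t → t ≤ (n:ℤ) → (n:ℤ) - t ≤ (k:ℤ) →
        _root_.stdBasis n t ∈ R := by
      intro k
      induction k with
      | zero => intro t h1 h2 h3; exact hkey3 t (by omega) h2
      | succ k ih =>
        intro t h1 h2 h3
        by_cases hc : (n:ℤ) - 3 < t
        · exact hkey3 t hc h2
        · push_neg at hc
          have hgt := hg t h1 hc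
          have hmem6 : ∀ s : ℤ, t + 1 ≤ s → s ≤ t + 6 → _root_.stdBasis n s ∈ R := by
            intro s hs1 hs2
            by_cases hsn : s ≤ (n:ℤ)
            · exact ih s (by omega) hsn (by push_cast at h3 ⊢; omega)
            · rw [stdBasis_zero (by omega)]
              exact Submodule.zero_mem R
          have hcolm : (fun i : Fin n =>
              g t * _root_.stdBasis n t i + f (t+1) * _root_.stdBasis n (t+1) i
              + e (t+2) * _root_.stdBasis n (t+2) i + d (t+3) * _root_.stdBasis n (t+3) i
              + c (t+4) * _root_.stdBasis n (t+4) i + b (t+5) * _root_.stdBasis n (t+5) i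
              + a (t+6) * _root_.stdBasis n (t+6) i) ∈ R := by
            refine ⟨Pi.single (⟨(t+2).toNat, by omega⟩ : Fin n) 1, ?_⟩
            rw [Matrix.mulVecLin_apply, Matrix.mulVec_single_one]
            funext i
            rw [Matrix.col_apply]
            exact col_eq a b c d e f g t _ (by simp; omega) i
          have hexp : _root_.stdBasis n t = (g t)⁻¹ • ((fun i : Fin n =>
              g t * _root_.stdBasis n t i + f (t+1) * _root_.stdBasis n (t+1) i
              + e (t+2) * _root_.stdBasis n (t+2) i + d (t+3) * _root_.stdBasis n (t+3) i
              + c (t+4) * _root_.stdBasis n (t+4) i + b (t+5) * _root_.stdBasis n (t+5) i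
              + a (t+6) * _root_.stdBasis n (t+6) i)
              - f (t+1) • _root_.stdBasis n (t+1) - e (t+2) • _root_.stdBasis n (t+2)
              - d (t+3) • _root_.stdBasis n (t+3) - c (t+4) • _root_.stdBasis n (t+4)
              - b (t+5) • _root_.stdBasis n (t+5) - a (t+6) • _root_.stdBasis n (t+6)) := by
            funext i
            simp only [Pi.smul_apply, Pi.sub_apply, smul_eq_mul]
            field_simp
            ring
          rw [hexp]
          refine Submodule.smul_mem R _ ?_
          refine Submodule.sub_mem R ?_ (Submodule.smul_mem R _ (hmem6 (t+6) (by omega) (by omega)))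
          refine Submodule.sub_mem R ?_ (Submodule.smul_mem R _ (hmem6 (t+5) (by omega) (by omega)))
          refine Submodule.sub_mem R ?_ (Submodule.smul_mem R _ (hmem6 (t+4) (by omega) (by omega)))
          refine Submodule.sub_mem R ?_ (Submodule.smul_mem R _ (hmem6 (t+3) (by omega) (by omega)))
          refine Submodule.sub_mem R ?_ (Submodule.smul_mem R _ (hmem6 (t+2) (by omega) (by omega)))
          exact Submodule.sub_mem R hcolm (Submodule.smul_mem R _ (hmem6 (t+1) (by omega) (by omega)))
    have hsurj : Function.Surjective (heptaMatrix n a b c d e f g).mulVec := by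
      intro y
      have hy : y = ∑ i : Fin n, y i • _root_.stdBasis n ((i:ℤ)+1) := by
        funext j
        rw [Finset.sum_apply, Finset.sum_eq_single j]
        · simp [_root_.stdBasis]
        · intro i _ hij
          have hne : (i:ℕ) ≠ (j:ℕ) := fun hh => hij (Fin.ext hh)
          simp only [Pi.smul_apply, _root_.stdBasis, smul_eq_mul]
          rw [if_neg (by omega), mul_zero]
        · intro hmem; exact absurd (Finset.mem_univ _) hmem
      have hmem : y ∈ R := by
        rw [hy]
        refine Submodule.sum_mem R fun i _ => Submodule.smul_mem R _ ?_
        have := i.isLt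
        exact hmain n ((i:ℤ)+1) (by omega) (by omega) (by omega)
      obtain ⟨x, hx⟩ := hmem
      exact ⟨x, by rw [← Matrix.mulVecLin_apply]; exact hx⟩
    exact isUnit_iff_ne_zero.mp ((Matrix.isUnit_iff_isUnit_det _).mp
      (Matrix.mulVec_surjective_iff_isUnit.mp hsurj))
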